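/- arXiv:2110.14259 — 2 statements merged into one kernel-verified Lean document; each statement's English description precedes it below -/
import Mathlib

section
/- Let 0 ≤ α < n and B a ball centered at the origin in ℝ^n. Then Mχ_B(x) ∼ χ_B(x) + ∑_{k≥1} 2^{−kn} χ_{2^k B \ 2^{k−1}B}(x) pointwise, with constants depending only on n; consequently, for any Banach lattice X in which ‖χ_{2^k B}‖_{X'} ≲ (2^k r_B)^s for some s < n − α, one has ‖(Mχ_B)^{1−α/n}‖_{X'} ≲ r_B^s. -/
open MeasureTheory Metric Set ENNReal

noncomputable section

abbrev Euc (n : ℕ) := EuclideanSpace ℝ (Fin n)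

/-- A Banach lattice of measurable functions on `ℝⁿ`, modeled through its
(extended-real valued) norm functional. -/
structure BFL (n : ℕ) where
  N : (Euc n → ℝ) → ℝ≥0∞
  mono : ∀ f g : Euc n → ℝ, (∀ x, |g x| ≤ |f x|) → N g ≤ N f
  add_le : ∀ f g : Euc n → ℝ, N (f + g) ≤ N f + N g
  smul : ∀ (a : ℝ) (f : Euc n → ℝ), N (fun x => a * f x) = ENNReal.ofReal |a| * N f

/-- The Köthe dual norm of a Banach function lattice, evaluated on a
nonnegative (extended-real valued) function. -/
def kdual {n : ℕ} (X : BFL n) (g : Euc n → ℝ≥0∞) : ℝ≥0∞ :=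
  ⨆ (f : Euc n → ℝ) (_ : Measurable f ∧ X.N f ≤ 1), ∫⁻ x, ENNReal.ofReal |f x| * g x

/-- The Hardy–Littlewood maximal operator (uncentered, over balls). -/
def hlMax (n : ℕ) (g : Euc n → ℝ≥0∞) (y : Euc n) : ℝ≥0∞ :=
  ⨆ (c : Euc n) (r : ℝ) (_ : 0 < r ∧ y ∈ ball c r),
    (volume (ball c r))⁻¹ * ∫⁻ x in ball c r, g x

/-- The characteristic function of a ball, as an `ℝ≥0∞` valued function. -/
def chiE (n : ℕ) (c : Euc n) (r : ℝ) : Euc n → ℝ≥0∞ := (ball c r).indicator fun _ => (1 : ℝ≥0∞)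

/-- `χ_B + ∑_{k ≥ 1} 2^{-kn} χ_{2^k B \ 2^{k-1} B}` for `B = B(0,r)`. -/
def dyadicSum (n : ℕ) (r : ℝ) (x : Euc n) : ℝ≥0∞ :=
  chiE n 0 r x + ∑' k : ℕ,
    (2 : ℝ≥0∞) ^ (-(((k : ℝ) + 1) * n)) *
      ((ball (0 : Euc n) ((2 : ℝ) ^ (k + 1) * r) \
        ball (0 : Euc n) ((2 : ℝ) ^ k * r)).indicator (fun _ => (1 : ℝ≥0∞)) x)

def ee (n k : ℕ) : ℝ≥0∞ := (2 : ℝ≥0∞) ^ (-(((k : ℝ) + 1) * n))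

lemma nontriv (n : ℕ) (hn : 0 < n) : Nontrivial (Euc n) :=
  Module.nontrivial_of_finrank_pos (R := ℝ) (by simp [finrank_euclideanSpace, hn])

lemma vol_ball (n : ℕ) (hn : 0 < n) (c : Euc n) (r : ℝ) (hr : 0 ≤ r) :
    volume (ball c r) = ENNReal.ofReal (r ^ n) * volume (ball (0 : Euc n) 1) := by
  haveI := nontriv n hn
  rw [Measure.addHaar_ball _ _ hr, finrank_euclideanSpace, Fintype.card_fin]

lemma vol_pos (n : ℕ) (hn : 0 < n) (c : Euc n) (r : ℝ) (hr : 0 < r) :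
    0 < volume (ball c r) := measure_ball_pos _ _ hr

lemma vol_lt_top (n : ℕ) (c : Euc n) (r : ℝ) : volume (ball c r) < ⊤ := measure_ball_lt_top

lemma setLint_chi (n : ℕ) (t : Set (Euc n)) (ht : MeasurableSet t) (c : Euc n) (r : ℝ) :
    ∫⁻ x in t, chiE n c r x = volume (t ∩ ball c r) := by
  rw [chiE, lintegral_indicator measurableSet_ball, Measure.restrict_restrict measurableSet_ball]
  simp [Set.inter_comm]

lemma ratio_eval (n : ℕ) (hn : 0 < n) (c : Euc n) (r ρ : ℝ) (hr : 0 < r) (hρ : 0 < ρ) :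
    (volume (ball c ρ))⁻¹ * volume (ball (0 : Euc n) r)
      = ENNReal.ofReal ((r / ρ) ^ n) := by
  rw [vol_ball n hn _ _ hr.le, vol_ball n hn c _ hρ.le]
  set U := volume (ball (0 : Euc n) 1) with hU
  have hU0 : U ≠ 0 := (vol_pos n hn 0 1 one_pos).ne'
  have hUt : U ≠ ⊤ := (vol_lt_top n 0 1).ne
  have h1 : ENNReal.ofReal (ρ ^ n) ≠ 0 := by positivity
  have h2 : ENNReal.ofReal (ρ ^ n) ≠ ⊤ := ofReal_ne_top
  rw [ENNReal.mul_inv (Or.inl h1) (Or.inl h2), mul_mul_mul_comm,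
    ENNReal.inv_mul_cancel hU0 hUt, mul_one, div_pow,
    ENNReal.ofReal_div_of_pos (by positivity), div_eq_mul_inv, mul_comm]

lemma hlMax_le {n : ℕ} (g : Euc n → ℝ≥0∞) (x : Euc n) {A : ℝ≥0∞}
    (h : ∀ c ρ, 0 < ρ → x ∈ ball c ρ →
      (volume (ball c ρ))⁻¹ * ∫⁻ y in ball c ρ, g y ≤ A) : hlMax n g x ≤ A :=
  iSup_le fun c => iSup_le fun ρ => iSup_le fun hc => h c ρ hc.1 hc.2

lemma le_hlMax {n : ℕ} (g : Euc n → ℝ≥0∞) (x : Euc n) (c : Euc n) (ρ : ℝ)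
    (hρ : 0 < ρ) (hx : x ∈ ball c ρ) :
    (volume (ball c ρ))⁻¹ * ∫⁻ y in ball c ρ, g y ≤ hlMax n g x :=
  le_iSup_of_le c (le_iSup_of_le ρ (le_iSup_of_le ⟨hρ, hx⟩ le_rfl))

lemma avg_le_one (n : ℕ) (hn : 0 < n) (c : Euc n) (ρ r : ℝ) (hρ : 0 < ρ) :
    (volume (ball c ρ))⁻¹ * ∫⁻ y in ball c ρ, chiE n 0 r y ≤ 1 := by
  rw [setLint_chi n _ measurableSet_ball]
  calc (volume (ball c ρ))⁻¹ * volume (ball c ρ ∩ ball 0 r)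
      ≤ (volume (ball c ρ))⁻¹ * volume (ball c ρ) :=
        mul_le_mul_right (measure_mono inter_subset_left) _
    _ = 1 := ENNReal.inv_mul_cancel (vol_pos n hn c ρ hρ).ne' (vol_lt_top n c ρ).ne

lemma avg_le_ratio (n : ℕ) (hn : 0 < n) (c : Euc n) (ρ r : ℝ) (hρ : 0 < ρ) (hr : 0 < r) :
    (volume (ball c ρ))⁻¹ * ∫⁻ y in ball c ρ, chiE n 0 r y ≤ ENNReal.ofReal ((r/ρ)^n) := by
  rw [setLint_chi n _ measurableSet_ball, ← ratio_eval n hn c r ρ hr hρ]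
  exact mul_le_mul_right (measure_mono inter_subset_right) _

lemma avg_big (n : ℕ) (hn : 0 < n) (r ρ : ℝ) (hr : 0 < r) (hle : r ≤ ρ) :
    (volume (ball (0:Euc n) ρ))⁻¹ * ∫⁻ y in ball (0:Euc n) ρ, chiE n 0 r y
      = ENNReal.ofReal ((r/ρ)^n) := by
  rw [setLint_chi n _ measurableSet_ball,
    inter_eq_self_of_subset_right (ball_subset_ball hle),
    ratio_eval n hn 0 r ρ hr (lt_of_lt_of_le hr hle)]

lemma ofReal_inv_pow (m n : ℕ) :
    ENNReal.ofReal ((((2:ℝ)^m)⁻¹) ^ n) = (2:ℝ≥0∞) ^ (-((m:ℝ) * n)) := by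
  rw [inv_pow, ← pow_mul, ENNReal.ofReal_inv_of_pos (by positivity),
    ENNReal.ofReal_pow (by norm_num), ENNReal.ofReal_ofNat, ENNReal.rpow_neg,
    ← ENNReal.rpow_natCast 2 (m*n)]
  push_cast
  ring_nf

lemma ball_lower (n : ℕ) (hn : 0 < n) (r : ℝ) (hr : 0 < r) (x : Euc n)
    (hx : x ∈ ball (0:Euc n) r) : 1 ≤ hlMax n (chiE n 0 r) x := by
  have := le_hlMax (chiE n 0 r) x 0 r hr hx
  rwa [avg_big n hn r r hr le_rfl, div_self hr.ne', one_pow, ENNReal.ofReal_one] at this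

lemma ann_lower (n : ℕ) (hn : 0 < n) (r : ℝ) (hr : 0 < r) (k : ℕ) (x : Euc n)
    (hx : x ∈ ball (0:Euc n) ((2:ℝ)^(k+1)*r)) : ee n k ≤ hlMax n (chiE n 0 r) x := by
  have h2 : (1:ℝ) ≤ 2^(k+1) := one_le_pow₀ one_le_two
  have hρ : (0:ℝ) < (2:ℝ)^(k+1)*r := by positivity
  have := le_hlMax (chiE n 0 r) x 0 _ hρ hx
  rw [avg_big n hn r _ hr (le_mul_of_one_le_left hr.le h2)] at this
  have hdiv : r / ((2:ℝ)^(k+1)*r) = ((2:ℝ)^(k+1))⁻¹ := by field_simp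
  rw [hdiv, ofReal_inv_pow (k+1) n] at this
  rw [ee]
  convert this using 2
  push_cast; ring

lemma hl_le_one (n : ℕ) (hn : 0 < n) (r : ℝ) (x : Euc n) :
    hlMax n (chiE n 0 r) x ≤ 1 :=
  hlMax_le _ _ fun c ρ hρ _ => avg_le_one n hn c ρ r hρ

lemma one_le_pow_mul (n : ℕ) {a : ℝ} (h : 0 ≤ a) :
    (1:ℝ≥0∞) ≤ (2:ℝ≥0∞)^(3*n) * (2:ℝ≥0∞)^(-((3:ℝ)*n) + a) := by
  rw [← ENNReal.rpow_natCast 2 (3*n), ← ENNReal.rpow_add _ _ (by norm_num) (by norm_num)]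
  calc (1:ℝ≥0∞) = 2^(0:ℝ) := by simp
    _ ≤ _ := ENNReal.rpow_le_rpow_of_exponent_le one_le_two (by push_cast; linarith)

lemma hl_upper_ann (n : ℕ) (hn : 0 < n) (r : ℝ) (hr : 0 < r) (k : ℕ) (x : Euc n)
    (hx : (2:ℝ)^k * r ≤ ‖x‖) :
    hlMax n (chiE n 0 r) x ≤ (2:ℝ≥0∞)^(3*n) * ee n k := by
  apply hlMax_le
  intro c ρ hρ hxρ
  by_cases hk : k ≤ 2
  · calc (volume (ball c ρ))⁻¹ * ∫⁻ y in ball c ρ, chiE n 0 r y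
        ≤ 1 := avg_le_one n hn c ρ r hρ
      _ ≤ _ := by
        rw [ee, show (-(((k:ℝ)+1) * n)) = -((3:ℝ)*n) + ((3:ℝ)*n -(((k:ℝ)+1) * n)) by ring]
        refine one_le_pow_mul n ?_
        have : (k:ℝ) ≤ 2 := by exact_mod_cast hk
        nlinarith [Nat.cast_nonneg (α := ℝ) n]
  · push_neg at hk
    obtain ⟨j, rfl⟩ : ∃ j, k = j + 3 := ⟨k - 3, by omega⟩
    by_cases hint : (ball c ρ ∩ ball (0:Euc n) r).Nonempty
    · obtain ⟨z, hz1, hz2⟩ := hint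
      have hxn : ‖x‖ < 2*ρ + r := by
        have d1 : dist x c < ρ := mem_ball.mp hxρ
        have d2 : dist z c < ρ := mem_ball.mp hz1
        have d3 : ‖z‖ < r := mem_ball_zero_iff.mp hz2
        have d4 : dist c z < ρ := by rw [dist_comm]; exact d2
        calc ‖x‖ = dist x 0 := (dist_zero_right x).symm
          _ ≤ dist x c + dist c z + dist z 0 := dist_triangle4 x c z 0
          _ < ρ + ρ + r := by rw [dist_zero_right]; linarith
          _ = 2*ρ + r := by ring
      have hρ2 : (2:ℝ)^(j+1) * r ≤ ρ := by
        have hp : (0:ℝ) < 2^j := pow_pos two_pos j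
        have e1 : (2:ℝ)^(j+3) = 2^j * 8 := by rw [pow_add]; norm_num
        have e2 : (2:ℝ)^(j+1) = 2^j * 2 := by rw [pow_add]; norm_num
        rw [e1] at hx; rw [e2]
        have h1 : r ≤ 2^j * r := le_mul_of_one_le_left hr.le (one_le_pow₀ one_le_two)
        nlinarith [h1]
      calc (volume (ball c ρ))⁻¹ * ∫⁻ y in ball c ρ, chiE n 0 r y
          ≤ ENNReal.ofReal ((r/ρ)^n) := avg_le_ratio n hn c ρ r hρ hr
        _ ≤ ENNReal.ofReal ((r/((2:ℝ)^(j+1)*r))^n) := by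
            apply ENNReal.ofReal_le_ofReal
            apply pow_le_pow_left₀ (by positivity)
            exact div_le_div_of_nonneg_left hr.le (by positivity) hρ2
        _ = (2:ℝ≥0∞)^(-((((j:ℝ)+1)) * n)) := by
            rw [show r / ((2:ℝ)^(j+1)*r) = ((2:ℝ)^(j+1))⁻¹ by field_simp,
              ofReal_inv_pow (j+1) n]
            push_cast; ring_nf
        _ ≤ _ := by
            rw [ee, ← ENNReal.rpow_natCast 2 (3*n),
              ← ENNReal.rpow_add _ _ (by norm_num) (by norm_num)]
            apply ENNReal.rpow_le_rpow_of_exponent_le one_le_two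
            push_cast; linarith
    · rw [setLint_chi n _ measurableSet_ball, not_nonempty_iff_eq_empty.mp hint]
      simp

lemma mem_ann_iff (n : ℕ) (r : ℝ) (k : ℕ) (x : Euc n) :
    x ∈ (ball (0 : Euc n) ((2 : ℝ) ^ (k + 1) * r) \ ball (0 : Euc n) ((2 : ℝ) ^ k * r))
      ↔ ((2:ℝ)^k * r ≤ ‖x‖ ∧ ‖x‖ < 2^(k+1) * r) := by
  simp [mem_diff, mem_ball_zero_iff, not_lt, and_comm]

lemma dyadic_eval_ball (n : ℕ) (r : ℝ) (hr : 0 < r) (x : Euc n) (hx : ‖x‖ < r) :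
    dyadicSum n r x = 1 := by
  have h1 : chiE n 0 r x = 1 := by
    rw [chiE, indicator_of_mem (mem_ball_zero_iff.mpr hx)]
  have h2 : ∀ k : ℕ, (2 : ℝ≥0∞) ^ (-(((k : ℝ) + 1) * n)) *
      ((ball (0 : Euc n) ((2 : ℝ) ^ (k + 1) * r) \
        ball (0 : Euc n) ((2 : ℝ) ^ k * r)).indicator (fun _ => (1 : ℝ≥0∞)) x) = 0 := by
    intro k
    rw [indicator_of_notMem, mul_zero]
    rw [mem_ann_iff]
    push_neg
    intro h
    exact absurd (lt_of_lt_of_le hx (le_mul_of_one_le_left hr.le (one_le_pow₀ one_le_two)))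
      (not_lt.mpr h)
  rw [dyadicSum, h1, tsum_congr h2, tsum_zero, add_zero]

lemma dyadic_eval_ann (n : ℕ) (r : ℝ) (hr : 0 < r) (k : ℕ) (x : Euc n)
    (h1 : (2:ℝ)^k * r ≤ ‖x‖) (h2 : ‖x‖ < 2^(k+1) * r) :
    dyadicSum n r x = ee n k := by
  have hchi : chiE n 0 r x = 0 := by
    rw [chiE, indicator_of_notMem]
    rw [mem_ball_zero_iff, not_lt]
    exact le_trans (le_mul_of_one_le_left hr.le (one_le_pow₀ one_le_two)) h1
  rw [dyadicSum, hchi, zero_add]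
  rw [tsum_eq_single k]
  · rw [indicator_of_mem ((mem_ann_iff n r k x).mpr ⟨h1, h2⟩), mul_one, ee]
  · intro j hj
    rw [indicator_of_notMem, mul_zero]
    rw [mem_ann_iff]
    push_neg
    intro hj1
    rcases lt_or_gt_of_ne hj with hlt | hgt
    · exact le_trans (mul_le_mul_of_nonneg_right (pow_le_pow_right₀ one_le_two hlt) hr.le) h1
    · exact absurd (lt_of_lt_of_le h2 (mul_le_mul_of_nonneg_right
        (pow_le_pow_right₀ one_le_two hgt) hr.le)) (not_lt.mpr hj1)

lemma exists_ann (r : ℝ) (hr : 0 < r) (a : ℝ) (ha : r ≤ a) :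
    ∃ k : ℕ, (2:ℝ)^k * r ≤ a ∧ a < 2^(k+1) * r := by
  obtain ⟨m, hm⟩ := pow_unbounded_of_one_lt (a / r) (one_lt_two (α := ℝ))
  have hm' : a < 2^m * r := by
    rw [div_lt_iff₀ hr] at hm; linarith
  have h0 : ¬ (a < 2^0 * r) := by simpa using not_lt.mpr ha
  haveI : DecidablePred (fun m : ℕ => a < (2:ℝ)^m * r) := fun _ => Classical.dec _
  have hex : ∃ m : ℕ, a < (2:ℝ)^m * r := ⟨m, hm'⟩
  set m₀ := Nat.find hex with hm₀def
  have hfind : a < 2^m₀ * r := Nat.find_spec hex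
  have hm₀ : m₀ ≠ 0 := by intro h; rw [h] at hfind; exact h0 (by simpa using hfind)
  obtain ⟨k, hk⟩ : ∃ k, m₀ = k + 1 := ⟨m₀ - 1, by omega⟩
  rw [hk] at hfind
  refine ⟨k, ?_, hfind⟩
  have := Nat.find_min hex (m := k) (by omega)
  push_neg at this
  exact this

lemma ee_eq (n k : ℕ) : ee n k = (2 : ℝ≥0∞) ^ (-(((k : ℝ) + 1) * n)) := rfl

lemma part1 (n : ℕ) (hn : 0 < n) (r : ℝ) (hr : 0 < r) (x : Euc n) :
    dyadicSum n r x ≤ hlMax n (chiE n 0 r) x ∧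
    hlMax n (chiE n 0 r) x ≤ (2:ℝ≥0∞)^(3*n) * dyadicSum n r x := by
  have hC1 : (1:ℝ≥0∞) ≤ (2:ℝ≥0∞)^(3*n) := one_le_pow_of_one_le' one_le_two _
  rcases lt_or_ge ‖x‖ r with hx | hx
  · rw [dyadic_eval_ball n r hr x hx, mul_one]
    exact ⟨ball_lower n hn r hr x (mem_ball_zero_iff.mpr hx),
      le_trans (hl_le_one n hn r x) hC1⟩
  · obtain ⟨k, hk1, hk2⟩ := exists_ann r hr ‖x‖ hx
    rw [dyadic_eval_ann n r hr k x hk1 hk2]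
    exact ⟨ann_lower n hn r hr k x (mem_ball_zero_iff.mpr hk2),
      hl_upper_ann n hn r hr k x hk1⟩

lemma chiE_measurable (n : ℕ) (c : Euc n) (r : ℝ) : Measurable (chiE n c r) :=
  measurable_const.indicator measurableSet_ball

lemma int_le_kdual {n : ℕ} (X : BFL n) (f : Euc n → ℝ) (hf : Measurable f ∧ X.N f ≤ 1)
    (g : Euc n → ℝ≥0∞) : ∫⁻ x, ENNReal.ofReal |f x| * g x ≤ kdual X g :=
  le_iSup_of_le f (le_iSup_of_le hf le_rfl)

lemma ee_le_one (n k : ℕ) : ee n k ≤ 1 := by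
  rw [ee_eq]
  calc (2:ℝ≥0∞) ^ (-(((k : ℝ) + 1) * n)) ≤ 2 ^ (0:ℝ) :=
      ENNReal.rpow_le_rpow_of_exponent_le one_le_two (neg_nonpos.mpr (by positivity))
    _ = 1 := by simp

lemma pointwise_bound (n : ℕ) (hn : 0 < n) (r : ℝ) (hr : 0 < r) (θ : ℝ)
    (hθ0 : 0 ≤ θ) (hθ1 : θ ≤ 1) (x : Euc n) :
    hlMax n (chiE n 0 r) x ^ θ ≤ (2:ℝ≥0∞)^(3*n) *
      (chiE n 0 r x + ∑' k : ℕ, (ee n k)^θ * chiE n 0 ((2:ℝ)^(k+1)*r) x) := by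
  have hC1 : (1:ℝ≥0∞) ≤ (2:ℝ≥0∞)^(3*n) := one_le_pow_of_one_le' one_le_two _
  rcases lt_or_ge ‖x‖ r with hx | hx
  · have h1 : hlMax n (chiE n 0 r) x ^ θ ≤ 1 := by
      calc hlMax n (chiE n 0 r) x ^ θ ≤ 1 ^ θ :=
          ENNReal.rpow_le_rpow (hl_le_one n hn r x) hθ0
        _ = 1 := ENNReal.one_rpow θ
    refine le_trans h1 ?_
    have h2 : chiE n 0 r x = 1 := by rw [chiE, indicator_of_mem (mem_ball_zero_iff.mpr hx)]
    calc (1:ℝ≥0∞) ≤ 1 * 1 := by norm_num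
      _ ≤ _ := mul_le_mul' hC1 (by rw [h2]; exact le_add_right le_rfl)
  · obtain ⟨k, hk1, hk2⟩ := exists_ann r hr ‖x‖ hx
    have h1 : hlMax n (chiE n 0 r) x ^ θ ≤ ((2:ℝ≥0∞)^(3*n) * ee n k) ^ θ :=
      ENNReal.rpow_le_rpow (hl_upper_ann n hn r hr k x hk1) hθ0
    have h2 : ((2:ℝ≥0∞)^(3*n) * ee n k) ^ θ ≤ (2:ℝ≥0∞)^(3*n) * (ee n k)^θ := by
      rw [ENNReal.mul_rpow_of_nonneg _ _ hθ0]
      refine mul_le_mul' ?_ le_rfl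
      calc ((2:ℝ≥0∞)^(3*n)) ^ θ ≤ ((2:ℝ≥0∞)^(3*n)) ^ (1:ℝ) :=
          ENNReal.rpow_le_rpow_of_exponent_le hC1 hθ1
        _ = (2:ℝ≥0∞)^(3*n) := ENNReal.rpow_one _
    refine le_trans (le_trans h1 h2) (mul_le_mul' le_rfl ?_)
    have hmem : chiE n 0 ((2:ℝ)^(k+1)*r) x = 1 := by
      rw [chiE, indicator_of_mem (mem_ball_zero_iff.mpr hk2)]
    calc (ee n k)^θ = (ee n k)^θ * chiE n 0 ((2:ℝ)^(k+1)*r) x := by rw [hmem, mul_one]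
      _ ≤ ∑' j : ℕ, (ee n j)^θ * chiE n 0 ((2:ℝ)^(j+1)*r) x := ENNReal.le_tsum k
      _ ≤ _ := le_add_left le_rfl

lemma kdual_chain (n : ℕ) (hn : 0 < n) (r : ℝ) (hr : 0 < r) (X : BFL n) (θ : ℝ)
    (hθ0 : 0 ≤ θ) (hθ1 : θ ≤ 1) :
    kdual X (fun y => hlMax n (chiE n 0 r) y ^ θ) ≤
      (2:ℝ≥0∞)^(3*n) * (kdual X (chiE n 0 r) +
        ∑' k : ℕ, (ee n k)^θ * kdual X (chiE n 0 ((2:ℝ)^(k+1)*r))) := by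
  refine iSup_le fun f => iSup_le fun hf => ?_
  have hfm : Measurable fun x => ENNReal.ofReal |f x| :=
    ENNReal.measurable_ofReal.comp hf.1.abs
  have hCne : ((2:ℝ≥0∞)^(3*n)) ≠ ⊤ := ENNReal.pow_ne_top ENNReal.ofNat_ne_top
  have heene : ∀ k, (ee n k)^θ ≠ ⊤ := fun k =>
    ne_top_of_le_ne_top ENNReal.one_ne_top (ENNReal.rpow_le_one (ee_le_one n k) hθ0)
  calc ∫⁻ x, ENNReal.ofReal |f x| * hlMax n (chiE n 0 r) x ^ θ
      ≤ ∫⁻ x, ENNReal.ofReal |f x| * ((2:ℝ≥0∞)^(3*n) *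
          (chiE n 0 r x + ∑' k : ℕ, (ee n k)^θ * chiE n 0 ((2:ℝ)^(k+1)*r) x)) :=
        lintegral_mono fun x =>
          mul_le_mul_right (pointwise_bound n hn r hr θ hθ0 hθ1 x) _
    _ = (2:ℝ≥0∞)^(3*n) * ∫⁻ x, ENNReal.ofReal |f x| *
          (chiE n 0 r x + ∑' k : ℕ, (ee n k)^θ * chiE n 0 ((2:ℝ)^(k+1)*r) x) := by
        rw [← lintegral_const_mul' _ _ hCne]
        congr 1; funext x; ring
    _ ≤ (2:ℝ≥0∞)^(3*n) * (kdual X (chiE n 0 r) +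
        ∑' k : ℕ, (ee n k)^θ * kdual X (chiE n 0 ((2:ℝ)^(k+1)*r))) := by
        refine mul_le_mul' le_rfl ?_
        have hsplit : (fun x => ENNReal.ofReal |f x| *
            (chiE n 0 r x + ∑' k : ℕ, (ee n k)^θ * chiE n 0 ((2:ℝ)^(k+1)*r) x)) =
            fun x => ENNReal.ofReal |f x| * chiE n 0 r x +
              ENNReal.ofReal |f x| * ∑' k : ℕ, (ee n k)^θ * chiE n 0 ((2:ℝ)^(k+1)*r) x := by
          funext x; ring
        rw [hsplit, lintegral_add_left (f := fun x => ENNReal.ofReal |f x| * chiE n 0 r x) (hfm.mul (chiE_measurable n 0 r))]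
        refine add_le_add (int_le_kdual X f hf _) ?_
        have h1 : (fun x => ENNReal.ofReal |f x| *
            ∑' k : ℕ, (ee n k)^θ * chiE n 0 ((2:ℝ)^(k+1)*r) x) =
            fun x => ∑' k : ℕ, ENNReal.ofReal |f x| *
              ((ee n k)^θ * chiE n 0 ((2:ℝ)^(k+1)*r) x) :=
          funext fun x => ENNReal.tsum_mul_left.symm
        rw [h1, lintegral_tsum (f := fun k x => ENNReal.ofReal |f x| *
              ((ee n k)^θ * chiE n 0 ((2:ℝ)^(k+1)*r) x)) fun k =>
          (hfm.mul ((chiE_measurable n 0 ((2:ℝ)^(k+1)*r)).const_mul _)).aemeasurable]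
        refine ENNReal.tsum_le_tsum fun k => ?_
        have h2 : (fun x => ENNReal.ofReal |f x| *
            ((ee n k)^θ * chiE n 0 ((2:ℝ)^(k+1)*r) x)) =
            fun x => (ee n k)^θ * (ENNReal.ofReal |f x| * chiE n 0 ((2:ℝ)^(k+1)*r) x) := by
          funext x; ring
        calc ∫⁻ x, ENNReal.ofReal |f x| * ((ee n k)^θ * chiE n 0 ((2:ℝ)^(k+1)*r) x)
            = (ee n k)^θ * ∫⁻ x, ENNReal.ofReal |f x| * chiE n 0 ((2:ℝ)^(k+1)*r) x := by
              rw [← lintegral_const_mul' _ _ (heene k)]; exact lintegral_congr fun x => congrFun h2 x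
          _ ≤ (ee n k)^θ * kdual X (chiE n 0 ((2:ℝ)^(k+1)*r)) :=
              mul_le_mul_right (int_le_kdual X f hf _) _

lemma term_eq (n k : ℕ) (θ s : ℝ) (r : ℝ) (hr : 0 < r) :
    (ee n k)^θ * ENNReal.ofReal (((2:ℝ)^(k+1)*r)^s) =
      ENNReal.ofReal (r^s) * ((2:ℝ≥0∞)^(s - (n:ℝ)*θ))^(k+1) := by
  have h2 : (0:ℝ) ≤ (2:ℝ)^(k+1) := by positivity
  rw [ee_eq, ← ENNReal.rpow_natCast ((2:ℝ≥0∞)^(s - (n:ℝ)*θ)) (k+1), ← ENNReal.rpow_mul,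
    Real.mul_rpow h2 hr.le, ENNReal.ofReal_mul (by positivity),
    ← Real.rpow_natCast (2:ℝ) (k+1), ← Real.rpow_mul (by norm_num),
    ← ENNReal.ofReal_rpow_of_pos (by norm_num : (0:ℝ) < 2),
    show ENNReal.ofReal 2 = 2 from by norm_num,
    ← ENNReal.rpow_mul]
  rw [show (2:ℝ≥0∞) ^ (-(((k:ℝ) + 1) * n) * θ) * ((2:ℝ≥0∞) ^ (((k+1:ℕ):ℝ) * s) * ENNReal.ofReal (r ^ s))
      = ENNReal.ofReal (r^s) * ((2:ℝ≥0∞) ^ (-(((k:ℝ) + 1) * n) * θ) * 2 ^ (((k+1:ℕ):ℝ) * s))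
    from by ring, ← ENNReal.rpow_add _ _ (by norm_num) (by norm_num)]
  congr 2
  push_cast
  ring

lemma geo_lt_top (c : ℝ) (hc : c < 0) : ∑' k : ℕ, ((2:ℝ≥0∞)^c)^(k+1) < ⊤ := by
  have ha : (2:ℝ≥0∞)^c < 1 := by
    calc (2:ℝ≥0∞)^c < 2^(0:ℝ) :=
        ENNReal.rpow_lt_rpow_of_exponent_lt one_lt_two ENNReal.ofNat_ne_top hc
      _ = 1 := by simp
  calc ∑' k : ℕ, ((2:ℝ≥0∞)^c)^(k+1) ≤ ∑' k : ℕ, ((2:ℝ≥0∞)^c)^k :=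
      ENNReal.tsum_le_tsum fun k => by
        rw [pow_succ]
        exact mul_le_of_le_one_right zero_le ha.le
    _ = (1 - (2:ℝ≥0∞)^c)⁻¹ := ENNReal.tsum_geometric _
    _ < ⊤ := ENNReal.inv_lt_top.mpr (tsub_pos_iff_lt.mpr ha)

lemma part2 (n : ℕ) (hn : 0 < n) (α : ℝ) (hα : 0 ≤ α) (hαn : α < n) (r : ℝ) (hr : 0 < r)
    (X : BFL n) (s : ℝ) (hs : s < (n:ℝ) - α) (C₀ : ℝ≥0∞) (hC₀ : C₀ < ⊤)
    (hX : ∀ k : ℕ, kdual X (chiE n 0 ((2:ℝ)^k * r)) ≤ C₀ * ENNReal.ofReal (((2:ℝ)^k*r)^s)) :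
    ∃ C : ℝ≥0∞, C < ⊤ ∧
      kdual X (fun y => hlMax n (chiE n 0 r) y ^ (1 - α/(n:ℝ))) ≤
        C * ENNReal.ofReal (r^s) := by
  set θ := 1 - α/(n:ℝ) with hθ
  have hn' : (0:ℝ) < n := Nat.cast_pos.mpr hn
  have hθ0 : 0 ≤ θ := by
    have : α/(n:ℝ) < 1 := (div_lt_one hn').mpr hαn
    rw [hθ]; linarith
  have hθ1 : θ ≤ 1 := by
    have : 0 ≤ α/(n:ℝ) := div_nonneg hα hn'.le
    rw [hθ]; linarith
  have hnθ : (n:ℝ)*θ = n - α := by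
    rw [hθ]; field_simp
  have hc : s - (n:ℝ)*θ < 0 := by rw [hnθ]; linarith
  set a := (2:ℝ≥0∞)^(s - (n:ℝ)*θ) with ha
  have hS : ∑' k : ℕ, a^(k+1) < ⊤ := geo_lt_top _ hc
  refine ⟨(2:ℝ≥0∞)^(3*n) * (C₀ + C₀ * ∑' k : ℕ, a^(k+1)), ?_, ?_⟩
  · refine ENNReal.mul_lt_top ?_ ?_
    · exact ENNReal.pow_lt_top (lt_top_iff_ne_top.mpr ENNReal.ofNat_ne_top)
    · exact ENNReal.add_lt_top.mpr ⟨hC₀, ENNReal.mul_lt_top hC₀ hS⟩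
  · calc kdual X (fun y => hlMax n (chiE n 0 r) y ^ θ)
        ≤ (2:ℝ≥0∞)^(3*n) * (kdual X (chiE n 0 r) +
            ∑' k : ℕ, (ee n k)^θ * kdual X (chiE n 0 ((2:ℝ)^(k+1)*r))) :=
          kdual_chain n hn r hr X θ hθ0 hθ1
      _ ≤ (2:ℝ≥0∞)^(3*n) * (C₀ * ENNReal.ofReal (r^s) +
            ∑' k : ℕ, ENNReal.ofReal (r^s) * (C₀ * a^(k+1))) := by
          refine mul_le_mul' le_rfl (add_le_add ?_ (ENNReal.tsum_le_tsum fun k => ?_))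
          · have h0 := hX 0
            rw [show (2:ℝ)^(0:ℕ) * r = r from by norm_num] at h0
            exact h0
          · calc (ee n k)^θ * kdual X (chiE n 0 ((2:ℝ)^(k+1)*r))
                ≤ (ee n k)^θ * (C₀ * ENNReal.ofReal (((2:ℝ)^(k+1)*r)^s)) :=
                  mul_le_mul_right (hX (k+1)) _
              _ = ENNReal.ofReal (r^s) * (C₀ * a^(k+1)) := by
                  rw [mul_comm C₀, ← mul_assoc, term_eq n k θ s r hr, ha]
                  ring
      _ = (2:ℝ≥0∞)^(3*n) * (C₀ + C₀ * ∑' k : ℕ, a^(k+1)) * ENNReal.ofReal (r^s) := by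
          rw [ENNReal.tsum_mul_left, ENNReal.tsum_mul_left]
          ring

theorem stmt18 (n : ℕ) (hn : 0 < n) (α : ℝ) (hα : 0 ≤ α) (hαn : α < n) :
    (∃ C : ℝ≥0∞, 0 < C ∧ C < ⊤ ∧ ∀ r : ℝ, 0 < r → ∀ x : Euc n,
      dyadicSum n r x ≤ C * hlMax n (chiE n 0 r) x ∧
      hlMax n (chiE n 0 r) x ≤ C * dyadicSum n r x) ∧
    ∀ r : ℝ, 0 < r → ∀ (X : BFL n) (s : ℝ), s < (n : ℝ) - α →
      (∃ C₀ : ℝ≥0∞, C₀ < ⊤ ∧ ∀ k : ℕ,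
        kdual X (chiE n 0 ((2 : ℝ) ^ k * r)) ≤ C₀ * ENNReal.ofReal (((2 : ℝ) ^ k * r) ^ s)) →
      ∃ C : ℝ≥0∞, C < ⊤ ∧
        kdual X (fun y => hlMax n (chiE n 0 r) y ^ (1 - α / (n : ℝ))) ≤
          C * ENNReal.ofReal (r ^ s) := by
  constructor
  · refine ⟨(2:ℝ≥0∞)^(3*n), ?_, ?_, fun r hr x => ?_⟩
    · exact lt_of_lt_of_le zero_lt_one (one_le_pow_of_one_le' one_le_two _)
    · exact ENNReal.pow_lt_top (lt_top_iff_ne_top.mpr ENNReal.ofNat_ne_top)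
    · obtain ⟨h1, h2⟩ := part1 n hn r hr x
      exact ⟨le_trans h1 (le_mul_of_one_le_left' (one_le_pow_of_one_le' one_le_two _)), h2⟩
  · rintro r hr X s hs ⟨C₀, hC₀, hX⟩
    exact part2 n hn α hα hαn r hr X s hs C₀ hC₀ hX
end
end

section
/- Let B be a ball in ℝ^n with |c_B| = 6 r_B and let x ∈ B. Then 2B ⊆ B(x, (3/5)|x|). Moreover, for x ∈ B and y ∉ 2B, |x−y|^{−n} ≲ |B|^{−1} Mχ_B(y), where M is the Hardy–Littlewood maximal operator, with a constant depending only on n. -/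
open MeasureTheory Metric Set ENNReal

noncomputable section

theorem stmt19 (n : ℕ) (hn : 0 < n) :
    ∃ C : ℝ≥0∞, C < ⊤ ∧ ∀ (c : Euc n) (r : ℝ), 0 < r → ‖c‖ = 6 * r →
      ∀ x ∈ ball c r,
        ball c (2 * r) ⊆ ball x ((3 / 5) * ‖x‖) ∧
        ∀ y ∉ ball c (2 * r),
          volume (ball c r) * (ENNReal.ofReal (‖x - y‖ ^ (n : ℝ)))⁻¹ ≤
            C * hlMax n (chiE n c r) y := by
  set V := volume (ball (0 : Euc n) 1) with hVdef
  have hV0 : V ≠ 0 := (measure_ball_pos volume _ one_pos).ne'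
  have hVt : V ≠ ⊤ := measure_ball_lt_top.ne
  refine ⟨ENNReal.ofReal (3 ^ n) * V, ENNReal.mul_lt_top ENNReal.ofReal_lt_top hVt.lt_top, ?_⟩
  intro c r hr hc x hx
  have hxc : dist x c < r := mem_ball.mp hx
  have hxnorm : 5 * r ≤ ‖x‖ := by
    have h1 : ‖c‖ - ‖x‖ ≤ ‖c - x‖ := norm_sub_norm_le c x
    have h2 : ‖c - x‖ = dist x c := by rw [dist_eq_norm, norm_sub_rev]
    linarith [hxc, hc ▸ h1, h2 ▸ h1]
  constructor
  · intro z hz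
    have hzc : dist z c < 2 * r := mem_ball.mp hz
    have : dist z x ≤ dist z c + dist c x := dist_triangle z c x
    have hcx : dist c x = dist x c := dist_comm c x
    refine mem_ball.mpr ?_
    nlinarith
  · intro y hy
    have hyc : 2 * r ≤ dist y c := by
      by_contra h
      exact hy (mem_ball.mpr (not_le.mp h))
    set d := ‖x - y‖ with hd
    have hdxy : d = dist x y := (dist_eq_norm x y).symm
    have hrd : r ≤ d := by
      have := dist_triangle y x c
      rw [hdxy]
      have h1 : dist y x = dist x y := dist_comm y x
      linarith
    have hdpos : 0 < d := lt_of_lt_of_le hr hrd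
    set R := dist y c + r with hRdef
    have hRpos : 0 < R := by positivity
    have hR3 : R ≤ 3 * d := by
      have := dist_triangle y x c
      have h1 : dist y x = dist x y := dist_comm y x
      rw [hRdef]
      linarith [hdxy ▸ hrd]
    have hsub : ball c r ⊆ ball y R := by
      intro z hz
      have hzc : dist z c < r := mem_ball.mp hz
      have := dist_triangle z c y
      refine mem_ball.mpr ?_
      have : dist c y = dist y c := dist_comm c y
      have := dist_triangle z c y
      rw [hRdef]
      rw [dist_comm c y] at this
      linarith
    have hint : (∫⁻ z in ball y R, chiE n c r z) = volume (ball c r) := by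
      rw [chiE, lintegral_indicator measurableSet_ball]
      simp [Measure.restrict_restrict measurableSet_ball,
        inter_eq_self_of_subset_left hsub]
    have hmaxle : (volume (ball y R))⁻¹ * volume (ball c r) ≤ hlMax n (chiE n c r) y := by
      rw [← hint]
      exact le_iSup_of_le y (le_iSup_of_le R
        (le_iSup_of_le ⟨hRpos, mem_ball_self hRpos⟩ le_rfl))
    have hfr : Module.finrank ℝ (Euc n) = n := finrank_euclideanSpace_fin
    have hvol : ∀ (z : Euc n) (s : ℝ), 0 ≤ s →
        volume (ball z s) = ENNReal.ofReal (s ^ n) * V := by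
      haveI : Nonempty (Fin n) := Fin.pos_iff_nonempty.mp hn
      intro z s hs
      rw [hVdef, Measure.addHaar_ball volume z hs, hfr]
    set A := ENNReal.ofReal (r ^ n) with hA
    set K := ENNReal.ofReal ((3 : ℝ) ^ n) with hK
    set D := ENNReal.ofReal (d ^ n) with hD
    set Rn := ENNReal.ofReal (R ^ n) with hRn
    have hRn0 : Rn ≠ 0 := by
      rw [hRn]; exact (ENNReal.ofReal_pos.mpr (pow_pos hRpos n)).ne'
    have hRnt : Rn ≠ ⊤ := ENNReal.ofReal_ne_top
    have hrpow : ‖x - y‖ ^ (n : ℝ) = d ^ n := by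
      rw [← hd, Real.rpow_natCast]
    have hkey : D⁻¹ ≤ K * Rn⁻¹ := by
      rw [hD, hK, hRn, ← ENNReal.ofReal_inv_of_pos (pow_pos hdpos n),
        ← ENNReal.ofReal_inv_of_pos (pow_pos hRpos n), ← ENNReal.ofReal_mul (by positivity)]
      apply ENNReal.ofReal_le_ofReal
      rw [inv_le_iff_one_le_mul₀ (pow_pos hdpos n)]
      have h1 : R ^ n ≤ 3 ^ n * d ^ n := by
        rw [← mul_pow]
        exact pow_le_pow_left₀ hRpos.le hR3 n
      have h2 : (0:ℝ) < R ^ n := pow_pos hRpos n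
      calc (1:ℝ) = R ^ n * (R ^ n)⁻¹ := (mul_inv_cancel₀ h2.ne').symm
        _ ≤ 3 ^ n * d ^ n * (R ^ n)⁻¹ := by gcongr
        _ = 3 ^ n * (R ^ n)⁻¹ * d ^ n := by ring
    rw [hvol c r hr.le, hrpow]
    rw [hvol y R hRpos.le, hvol c r hr.le] at hmaxle
    calc A * V * D⁻¹ ≤ A * V * (K * Rn⁻¹) := mul_le_mul_right hkey _
      _ = K * V * ((Rn * V)⁻¹ * (A * V)) := by
          rw [ENNReal.mul_inv (Or.inl hRn0) (Or.inl hRnt)]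
          rw [show Rn⁻¹ * V⁻¹ * (A * V) = Rn⁻¹ * A * (V⁻¹ * V) by ring,
            ENNReal.inv_mul_cancel hV0 hVt, mul_one]
          ring
      _ ≤ K * V * hlMax n (chiE n c r) y := mul_le_mul_right hmaxle _
end
end
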